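/- For all natural numbers k ≥ 1 and n with k ≤ n, the elementary symmetric polynomial e_k(x_1,...,x_n) equals ∑_{i=1}^{k} (-1)^{i+1} · h_i(x_1,...,x_{n-i+1}) · e_{k-i}(x_1,...,x_{n-i}). -/

import Mathlib

open MvPolynomial Finset

/-- Elementary symmetric polynomial of degree `k` in the first `m` variables `x_1,…,x_m`
(0-indexed: the variables `X i` with `(i : ℕ) < m`), viewed in the polynomial ring in
`n` variables. It is `1` for `k = 0` and `0` for `k > m`. -/
noncomputable def esymb (R : Type) [CommRing R] (n m k : ℕ) : MvPolynomial (Fin n) R :=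
  ∑ S ∈ (Finset.univ.filter (fun i : Fin n => (i : ℕ) < m)).powersetCard k, ∏ i ∈ S, X i

/-- Complete homogeneous symmetric polynomial of degree `k` in the first `m` variables
`x_1,…,x_m` (0-indexed: the variables `X i` with `(i : ℕ) < m`), viewed in the polynomial
ring in `n` variables. It is `1` for `k = 0` and, for `k > 0`, it is `0` when `m = 0`. -/
noncomputable def hsymb (R : Type) [CommRing R] (n m k : ℕ) : MvPolynomial (Fin n) R :=
  ∑ μ ∈ (Finset.univ.filter (fun i : Fin n => (i : ℕ) < m)).sym k,
    ((μ : Multiset (Fin n)).map X).prod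

section Aux
variable (R : Type) [CommRing R] (n : ℕ)

private def filt (n m : ℕ) : Finset (Fin n) :=
  Finset.univ.filter (fun i : Fin n => (i : ℕ) < m)

lemma filt_card {m : ℕ} (h : m ≤ n) : (filt n m).card = m := by
  have he : filt n m = (Finset.range m).attachFin
      (fun x hx => lt_of_lt_of_le (Finset.mem_range.1 hx) h) := by
    ext i; simp [filt, Finset.mem_attachFin]
  rw [he, Finset.card_attachFin, Finset.card_range]

lemma filt_succ {m : ℕ} (hm : m < n) :
    filt n (m+1) = insert (⟨m, hm⟩ : Fin n) (filt n m) := by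
  ext i
  simp only [filt, Finset.mem_filter, Finset.mem_univ, true_and, Finset.mem_insert, Fin.ext_iff]
  omega

lemma not_mem_filt {m : ℕ} (hm : m < n) : (⟨m, hm⟩ : Fin n) ∉ filt n m := by
  simp [filt]

lemma esymb_zero (m : ℕ) : esymb R n m 0 = 1 := by
  simp [esymb]

lemma hsymb_zero (m : ℕ) : hsymb R n m 0 = 1 := by
  rw [hsymb, Finset.sym_zero, Finset.sum_singleton]
  rfl

lemma esymb_eq_zero {m k : ℕ} (h1 : m ≤ n) (h2 : m < k) : esymb R n m k = 0 := by
  rw [esymb, Finset.powersetCard_eq_empty.2, Finset.sum_empty]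
  rw [show (Finset.univ.filter (fun i : Fin n => (i : ℕ) < m)) = filt n m from rfl,
    filt_card n h1]
  exact h2

lemma hsymb_zero_left (k : ℕ) : hsymb R n 0 (k+1) = 0 := by
  have : (Finset.univ.filter (fun i : Fin n => (i : ℕ) < 0)) = (∅ : Finset (Fin n)) := by
    ext i; simp
  rw [hsymb, this, Finset.sym_empty, Finset.sum_empty]

lemma esymb_succ {m : ℕ} (hm : m < n) (k : ℕ) :
    esymb R n (m+1) (k+1) = esymb R n m (k+1) + X (⟨m, hm⟩ : Fin n) * esymb R n m k := by
  have hx := not_mem_filt n hm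
  rw [esymb, show (Finset.univ.filter (fun i : Fin n => (i : ℕ) < m+1)) = filt n (m+1) from rfl,
    filt_succ n hm, Finset.powersetCard_succ_insert hx]
  rw [Finset.sum_union]
  · congr 1
    rw [Finset.sum_image]
    · rw [esymb, mul_sum]
      refine Finset.sum_congr rfl fun S hS => ?_
      have hxS : (⟨m, hm⟩ : Fin n) ∉ S :=
        fun hc => hx ((Finset.mem_powersetCard.1 hS).1 hc)
      rw [Finset.prod_insert hxS]
    · intro S hS S' hS' hSS'
      have hxS : (⟨m, hm⟩ : Fin n) ∉ S :=
        fun hc => hx ((Finset.mem_powersetCard.1 hS).1 hc)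
      have hxS' : (⟨m, hm⟩ : Fin n) ∉ S' :=
        fun hc => hx ((Finset.mem_powersetCard.1 hS').1 hc)
      have h2 : (insert (⟨m, hm⟩ : Fin n) S).erase ⟨m, hm⟩ = (insert (⟨m, hm⟩ : Fin n) S').erase ⟨m, hm⟩ := by rw [hSS']
      rwa [Finset.erase_insert hxS, Finset.erase_insert hxS'] at h2
  · rw [Finset.disjoint_left]
    intro S hS hS'
    obtain ⟨T, hT, rfl⟩ := Finset.mem_image.1 hS'
    exact hx ((Finset.mem_powersetCard.1 hS).1 (Finset.mem_insert_self _ _))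

lemma sym_insert_eq {α : Type*} [DecidableEq α] {a : α} {s : Finset α} (ha : a ∉ s) (k : ℕ) :
    (insert a s).sym (k+1) = s.sym (k+1) ∪ ((insert a s).sym k).image (Sym.cons a) := by
  ext μ
  simp only [Finset.mem_union, Finset.mem_sym_iff, Finset.mem_image, Finset.mem_insert]
  constructor
  · intro h
    by_cases hamem : a ∈ μ
    · right
      refine ⟨μ.erase a hamem, ?_, (Sym.cons_erase hamem).symm ▸ rfl⟩
      intro b hb
      have hbμ : b ∈ μ := by
        have : b ∈ (μ : Multiset α).erase a := by rwa [← Sym.coe_erase hamem]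
        exact Multiset.mem_of_mem_erase this
      exact h b hbμ
    · left
      intro b hb
      rcases h b hb with rfl | hbs
      · exact absurd hb hamem
      · exact hbs
  · rintro (h | ⟨ν, hν, rfl⟩)
    · exact fun b hb => Or.inr (h b hb)
    · intro b hb
      rcases Sym.mem_cons.1 hb with rfl | hbν
      · exact Or.inl rfl
      · exact hν b hbν

lemma hsymb_succ {m : ℕ} (hm : m < n) (k : ℕ) :
    hsymb R n (m+1) (k+1) = hsymb R n m (k+1) + X (⟨m, hm⟩ : Fin n) * hsymb R n (m+1) k := by
  have hx := not_mem_filt n hm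
  rw [hsymb, show (Finset.univ.filter (fun i : Fin n => (i : ℕ) < m+1)) = filt n (m+1) from rfl,
    filt_succ n hm, sym_insert_eq hx]
  rw [Finset.sum_union]
  · congr 1
    rw [Finset.sum_image]
    · rw [hsymb, show (Finset.univ.filter (fun i : Fin n => (i : ℕ) < m+1)) = filt n (m+1) from rfl,
        filt_succ n hm, mul_sum]
      refine Finset.sum_congr rfl fun ν hν => ?_
      rw [Sym.coe_cons, Multiset.map_cons, Multiset.prod_cons]
    · intro ν hν ν' hν' hc
      exact (Sym.cons_inj_right _ _ _).1 hc
  · rw [Finset.disjoint_left]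
    intro μ hμ hμ'
    obtain ⟨ν, hν, rfl⟩ := Finset.mem_image.1 hμ'
    have : (⟨m, hm⟩ : Fin n) ∈ filt n m :=
      (Finset.mem_sym_iff.1 hμ) _ (Sym.mem_cons_self _ _)
    exact hx this

private noncomputable def gsum (M k : ℕ) : MvPolynomial (Fin n) R :=
  ∑ i ∈ Finset.range (k+1),
    (-1 : MvPolynomial (Fin n) R)^i * hsymb R n (M+1-i) i * esymb R n (M-i) (k-i)

lemma gsum_base (K : ℕ) (hK : K ≤ n) : gsum R n K (K+1) = 0 := by
  refine Finset.sum_eq_zero fun i hi => ?_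
  rw [Finset.mem_range] at hi
  rcases Nat.lt_or_ge i (K+1) with h | h
  · rw [esymb_eq_zero R n (by omega : K - i ≤ n) (by omega : K - i < K + 1 - i), mul_zero]
  · have hiK : i = K + 1 := by omega
    subst hiK
    rw [show K + 1 - (K + 1) = 0 from by omega, hsymb_zero_left, mul_zero, zero_mul]

lemma gsum_step (M k : ℕ) (_hk1 : 1 ≤ k) (hk : k ≤ M+1) (hn : M+1 ≤ n) :
    gsum R n (M+1) k = gsum R n M k := by
  set u : ℕ → MvPolynomial (Fin n) R :=
    fun j => (-1)^j * hsymb R n (M+1-j) j * esymb R n (M+1-j) (k-j) with hu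
  have peel : gsum R n (M+1) k
      = (∑ i ∈ Finset.range k, (-1 : MvPolynomial (Fin n) R)^(i+1) *
          hsymb R n (M+1-i) (i+1) * esymb R n (M-i) (k-(i+1))) + esymb R n (M+1) k := by
    rw [gsum, Finset.sum_range_succ']
    refine congrArg₂ (· + ·) ?_ ?_
    · refine Finset.sum_congr rfl fun i hi => ?_
      simp [Nat.succ_sub_succ_eq_sub]
    · simp [hsymb_zero]
  have key : ∀ i ∈ Finset.range k,
      (-1 : MvPolynomial (Fin n) R)^(i+1) * hsymb R n (M+1-i) (i+1) * esymb R n (M-i) (k-(i+1))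
      = (u (i+1) - u i) + (-1)^i * hsymb R n (M+1-i) i * esymb R n (M-i) (k-i) := by
    intro i hi
    rw [Finset.mem_range] at hi
    have hm' : M - i < n := by omega
    have e1 : M + 1 - i = (M - i) + 1 := by omega
    have e2 : M + 1 - (i+1) = M - i := by omega
    have e3 : k - i = (k - (i+1)) + 1 := by omega
    simp only [hu, e1, e2, e3]
    rw [hsymb_succ R n hm' i, esymb_succ R n hm' (k-(i+1))]
    ring
  have hsum1 : (∑ i ∈ Finset.range k, (-1 : MvPolynomial (Fin n) R)^(i+1) *
        hsymb R n (M+1-i) (i+1) * esymb R n (M-i) (k-(i+1)))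
      = (u k - u 0) + ∑ i ∈ Finset.range k,
          (-1 : MvPolynomial (Fin n) R)^i * hsymb R n (M+1-i) i * esymb R n (M-i) (k-i) := by
    rw [Finset.sum_congr rfl key, Finset.sum_add_distrib, Finset.sum_range_sub u]
  have hsum2 : (∑ i ∈ Finset.range k,
        (-1 : MvPolynomial (Fin n) R)^i * hsymb R n (M+1-i) i * esymb R n (M-i) (k-i))
      = gsum R n M k - (-1)^k * hsymb R n (M+1-k) k := by
    rw [gsum, Finset.sum_range_succ, Nat.sub_self, esymb_zero]
    ring
  have hu0 : u 0 = esymb R n (M+1) k := by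
    simp [hu, hsymb_zero]
  have huk : u k = (-1)^k * hsymb R n (M+1-k) k := by
    simp only [hu, Nat.sub_self, esymb_zero, mul_one]
  rw [peel, hsum1, hsum2, hu0, huk]
  ring

lemma gsum_top (k : ℕ) (hk : 1 ≤ k) (hkn : k ≤ n) : gsum R n n k = 0 := by
  have main : ∀ d, k - 1 + d ≤ n → gsum R n (k - 1 + d) k = 0 := by
    intro d
    induction d with
    | zero =>
      intro _
      have hk' : k - 1 + 1 = k := by omega
      have hb := gsum_base R n (k-1) (by omega)
      rwa [hk', Nat.add_zero] at *
    | succ d ih =>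
      intro h
      rw [show k - 1 + (d+1) = (k - 1 + d) + 1 from by omega,
        gsum_step R n (k-1+d) k hk (by omega) (by omega)]
      exact ih (by omega)
  have := main (n - (k-1)) (by omega)
  rwa [show k - 1 + (n - (k-1)) = n from by omega] at this

end Aux

/-- Proposition: e_k(x_1,…,x_n) = ∑_{i=1}^{k} (-1)^{i+1} h_i(x_1,…,x_{n-i+1}) e_{k-i}(x_1,…,x_{n-i}). -/
theorem stmt2 (R : Type) [CommRing R] (n k : ℕ) (hk : 1 ≤ k) (hkn : k ≤ n) :
    esymb R n n k =
      ∑ i ∈ Finset.Icc 1 k, (-1 : MvPolynomial (Fin n) R) ^ (i + 1) *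
        hsymb R n (n + 1 - i) i * esymb R n (n - i) (k - i) := by
  have h0 := gsum_top R n k hk hkn
  have peel : gsum R n n k
      = (∑ i ∈ Finset.range k, (-1 : MvPolynomial (Fin n) R)^(i+1) *
          hsymb R n (n+1-(i+1)) (i+1) * esymb R n (n-(i+1)) (k-(i+1))) + esymb R n n k := by
    rw [gsum, Finset.sum_range_succ']
    congr 1
    simp [hsymb_zero]
  have h3 : (∑ i ∈ Finset.range k, (-1 : MvPolynomial (Fin n) R)^(i+1) *
      hsymb R n (n+1-(i+1)) (i+1) * esymb R n (n-(i+1)) (k-(i+1))) + esymb R n n k = 0 := by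
    rw [← peel]; exact h0
  have h1 : esymb R n n k = ∑ i ∈ Finset.range k, (-1 : MvPolynomial (Fin n) R)^(i+2) *
      hsymb R n (n+1-(i+1)) (i+1) * esymb R n (n-(i+1)) (k-(i+1)) := by
    have h4 : esymb R n n k = -(∑ i ∈ Finset.range k, (-1 : MvPolynomial (Fin n) R)^(i+1) *
        hsymb R n (n+1-(i+1)) (i+1) * esymb R n (n-(i+1)) (k-(i+1))) := by
      linear_combination h3
    rw [h4, ← Finset.sum_neg_distrib]
    refine Finset.sum_congr rfl fun i hi => ?_
    ring
  rw [← Finset.Ico_add_one_right_eq_Icc, Finset.sum_Ico_eq_sum_range, h1]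
  refine Finset.sum_congr rfl fun i hi => ?_
  rw [show 1 + i = i + 1 from by omega]
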